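/- Let A be a d×d real symmetric matrix with eigenvalues ν₁ ≥ … ≥ ν_d (counted with multiplicity). Then for every i ∈ {1,…,d}, ν_i ≤ max_{j ∈ {i,…,d}} Σ_{k=i}^{d} |A_{j,k}|; that is, the i-th largest eigenvalue of A is at most the largest absolute row sum of the trailing principal submatrix of A formed by rows and columns i through d. -/

import Mathlib

open Matrix Finset

private lemma sum_dotProduct' {n ι : Type*} [Fintype n] (s : Finset ι)
    (f : ι → n → ℝ) (v : n → ℝ) :
    (∑ j ∈ s, f j) ⬝ᵥ v = ∑ j ∈ s, f j ⬝ᵥ v := by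
  simp only [dotProduct, Finset.sum_apply, Finset.sum_mul]
  exact Finset.sum_comm

private lemma dotProduct_sum' {n ι : Type*} [Fintype n] (s : Finset ι)
    (v : n → ℝ) (f : ι → n → ℝ) :
    v ⬝ᵥ (∑ j ∈ s, f j) = ∑ j ∈ s, v ⬝ᵥ f j := by
  simp only [dotProduct, Finset.sum_apply, Finset.mul_sum]
  exact Finset.sum_comm

/-- **Gersgorin-type bound on the i-th largest eigenvalue of a symmetric matrix:**
`νᵢ ≤ max_{j ≥ i} ∑_{k ≥ i} |A_{j,k}|` (indices 0-based). The eigenvalues `ν` are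
listed in decreasing order with multiplicity, witnessed by an orthonormal system of
eigenvectors. -/
theorem eigenvalue_le_trailing_row_sum
    {d : ℕ}
    (A : Matrix (Fin d) (Fin d) ℝ) (hA : A.IsSymm)
    (ν : Fin d → ℝ) (hν_anti : Antitone ν)
    (e : Fin d → Fin d → ℝ)
    (he_orth : ∀ i j, e i ⬝ᵥ e j = if i = j then (1 : ℝ) else 0)
    (he_eig : ∀ i, A.mulVec (e i) = ν i • e i)
    (i : Fin d) :
    ν i ≤ (Finset.Ici i).sup' ⟨i, Finset.mem_Ici.mpr le_rfl⟩
      (fun j => ∑ k ∈ Finset.Ici i, |A j k|) := by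
  classical
  set S : Finset (Fin d) := Finset.Ici i with hS
  set M : ℝ := S.sup' ⟨i, Finset.mem_Ici.mpr le_rfl⟩ (fun j => ∑ k ∈ S, |A j k|) with hM
  -- the two subspaces
  set U : Submodule ℝ (Fin d → ℝ) :=
    Submodule.span ℝ (Set.range fun j : Set.Iic i => e j.1) with hU
  set V : Submodule ℝ (Fin d → ℝ) :=
    Submodule.span ℝ (Set.range fun k : Set.Ici i => Pi.single k.1 (1 : ℝ)) with hV
  -- orthonormality in subtype form
  have horth : ∀ m j : Set.Iic i, e m.1 ⬝ᵥ e j.1 = if m = j then (1 : ℝ) else 0 := by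
    intro m j
    rw [he_orth]
    simp [Subtype.ext_iff]
  -- key computation for dot products of combinations
  have key : ∀ c f : Set.Iic i → ℝ,
      (∑ j : Set.Iic i, c j • e j.1) ⬝ᵥ (∑ j : Set.Iic i, f j • e j.1)
        = ∑ j : Set.Iic i, c j * f j := by
    intro c f
    rw [sum_dotProduct']
    have : ∀ m : Set.Iic i,
        (c m • e m.1) ⬝ᵥ (∑ j : Set.Iic i, f j • e j.1) = c m * f m := by
      intro m
      rw [smul_dotProduct, dotProduct_sum']
      simp only [dotProduct_smul, horth, smul_eq_mul, mul_ite, mul_one, mul_zero]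
      rw [Finset.sum_ite_eq Finset.univ m f, if_pos (Finset.mem_univ m)]
    simp only [this]
  -- linear independence of the eigenvectors
  have he_li : LinearIndependent ℝ (fun j : Set.Iic i => e j.1) := by
    rw [Fintype.linearIndependent_iff]
    intro c hc j
    have h := congrArg (· ⬝ᵥ e j.1) hc
    simp only [zero_dotProduct] at h
    rw [sum_dotProduct'] at h
    simp only [smul_dotProduct, horth, smul_eq_mul, mul_ite, mul_one, mul_zero] at h
    rwa [Finset.sum_ite_eq' Finset.univ j c, if_pos (Finset.mem_univ j)] at h
  -- linear independence of the coordinate vectors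
  have hs_li : LinearIndependent ℝ (fun k : Set.Ici i => (Pi.single k.1 (1 : ℝ) : Fin d → ℝ)) := by
    have h0 : LinearIndependent ℝ (fun m : Fin d => (Pi.single m (1 : ℝ) : Fin d → ℝ)) := by
      have hfe : ⇑(Pi.basisFun ℝ (Fin d)) = fun m : Fin d => (Pi.single m (1 : ℝ) : Fin d → ℝ) :=
        funext fun m => Pi.basisFun_apply ℝ (Fin d) m
      exact hfe ▸ (Pi.basisFun ℝ (Fin d)).linearIndependent
    exact h0.comp (fun k : Set.Ici i => (k : Fin d)) Subtype.val_injective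
  -- dimensions
  have hUd : Module.finrank ℝ U = i.1 + 1 := by
    rw [hU, finrank_span_eq_card he_li, Fintype.card_Iic, Fin.card_Iic]
  have hVd : Module.finrank ℝ V = d - i.1 := by
    rw [hV, finrank_span_eq_card hs_li, Fintype.card_Ici, Fin.card_Ici]
  have htot : Module.finrank ℝ (Fin d → ℝ) = d := by
    simp [Module.finrank_pi]
  have hinf : 0 < Module.finrank ℝ ↥(U ⊓ V) := by
    have h1 := Submodule.finrank_sup_add_finrank_inf_eq U V
    have h2 : Module.finrank ℝ ↥(U ⊔ V) ≤ Module.finrank ℝ (Fin d → ℝ) :=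
      Submodule.finrank_le _
    rw [htot] at h2
    have h3 : i.1 < d := i.isLt
    omega
  obtain ⟨x, hx0⟩ := Module.finrank_pos_iff_exists_ne_zero.mp hinf
  set w : Fin d → ℝ := (x : Fin d → ℝ) with hwdef
  have hwne : w ≠ 0 := fun h => hx0 (by rwa [← Submodule.coe_eq_zero])
  have hwU : w ∈ U := x.2.1
  have hwV : w ∈ V := x.2.2
  obtain ⟨c, hc⟩ := (Submodule.mem_span_range_iff_exists_fun ℝ).mp hwU
  obtain ⟨b, hb⟩ := (Submodule.mem_span_range_iff_exists_fun ℝ).mp hwV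
  -- w vanishes on coordinates below i
  have hw0 : ∀ m, m ∉ S → w m = 0 := by
    intro m hm
    have hmi : m < i := by simpa [hS, Finset.mem_Ici, not_le] using hm
    rw [← hb]
    simp only [Finset.sum_apply, Pi.smul_apply, smul_eq_mul]
    apply Finset.sum_eq_zero
    intro k _
    have hk : k.1 ≠ m := fun h => absurd (h ▸ k.2) (not_le.mpr hmi)
    rw [Pi.single_eq_of_ne (Ne.symm hk), mul_zero]
  -- dot products
  have hww : w ⬝ᵥ w = ∑ j : Set.Iic i, c j * c j := by rw [← hc]; exact key c c
  have hAw : A.mulVec w = ∑ j : Set.Iic i, (c j * ν j.1) • e j.1 := by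
    rw [← hc, show A.mulVec (∑ j : Set.Iic i, c j • e j.1)
        = A.mulVecLin (∑ j : Set.Iic i, c j • e j.1) from rfl, map_sum]
    refine Finset.sum_congr rfl fun j _ => ?_
    rw [_root_.map_smul, Matrix.mulVecLin_apply, he_eig, smul_smul]
  have hwAw : w ⬝ᵥ A.mulVec w = ∑ j : Set.Iic i, c j * (c j * ν j.1) := by
    rw [hAw]
    conv_lhs => rw [← hc]
    exact key c (fun j => c j * ν j.1)
  -- positivity of w ⬝ᵥ w
  have hpos : 0 < w ⬝ᵥ w := by
    rcases lt_or_eq_of_le (Finset.sum_nonneg fun m _ => mul_self_nonneg (w m) :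
        (0:ℝ) ≤ w ⬝ᵥ w) with h | h
    · exact h
    · exact absurd (dotProduct_self_eq_zero.mp h.symm) hwne
  -- lower bound
  have hlow : ν i * (w ⬝ᵥ w) ≤ w ⬝ᵥ A.mulVec w := by
    rw [hww, hwAw, Finset.mul_sum]
    refine Finset.sum_le_sum fun j _ => ?_
    have h1 : ν i ≤ ν j.1 := hν_anti j.2
    nlinarith [mul_self_nonneg (c j)]
  -- rewrite the quadratic form as a double sum over S
  have hexp : w ⬝ᵥ A.mulVec w = ∑ m ∈ S, ∑ k ∈ S, w m * A m k * w k := by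
    have h0 : w ⬝ᵥ A.mulVec w = ∑ m, ∑ k, w m * A m k * w k := by
      simp [dotProduct, Matrix.mulVec, Finset.mul_sum, mul_assoc]
    have e1 : ∀ m, ∑ k ∈ S, w m * A m k * w k = ∑ k, w m * A m k * w k :=
      fun m => Finset.sum_subset (Finset.subset_univ S)
        (fun k _ hk => by rw [hw0 k hk, mul_zero])
    have e2 : ∑ m ∈ S, ∑ k, w m * A m k * w k = ∑ m, ∑ k, w m * A m k * w k :=
      Finset.sum_subset (Finset.subset_univ S)
        (fun m _ hm => Finset.sum_eq_zero fun k _ => by rw [hw0 m hm, zero_mul, zero_mul])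
    rw [h0, ← e2]
    exact Finset.sum_congr rfl fun m _ => (e1 m).symm
  have hwwS : w ⬝ᵥ w = ∑ m ∈ S, w m ^ 2 := by
    have h0 : w ⬝ᵥ w = ∑ m, w m ^ 2 := by simp [dotProduct, sq]
    rw [h0]
    exact (Finset.sum_subset (Finset.subset_univ S)
      (fun m _ hm => by rw [hw0 m hm]; ring)).symm
  have hsym : ∀ m k, |A k m| = |A m k| := fun m k => by rw [hA.apply m k]
  -- upper bound
  have hup : w ⬝ᵥ A.mulVec w ≤ M * (w ⬝ᵥ w) := by
    rw [hexp, hwwS, Finset.mul_sum]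
    calc ∑ m ∈ S, ∑ k ∈ S, w m * A m k * w k
        ≤ ∑ m ∈ S, ∑ k ∈ S, |A m k| * ((w m ^ 2 + w k ^ 2) / 2) := by
          refine Finset.sum_le_sum fun m _ => Finset.sum_le_sum fun k _ => ?_
          have h3 : w m * A m k * w k ≤ |w m * A m k * w k| := le_abs_self _
          have h4 : |w m * A m k * w k| = |A m k| * (|w m| * |w k|) := by
            rw [abs_mul, abs_mul]; ring
          have h5 : |w m| * |w k| ≤ (w m ^ 2 + w k ^ 2) / 2 := by
            nlinarith [sq_nonneg (|w m| - |w k|), sq_abs (w m), sq_abs (w k)]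
          calc w m * A m k * w k ≤ |A m k| * (|w m| * |w k|) := h4 ▸ h3
            _ ≤ |A m k| * ((w m ^ 2 + w k ^ 2) / 2) :=
              mul_le_mul_of_nonneg_left h5 (abs_nonneg _)
      _ = ∑ m ∈ S, ∑ k ∈ S, (|A m k| * w m ^ 2 + |A m k| * w k ^ 2) / 2 := by
          exact Finset.sum_congr rfl fun m _ => Finset.sum_congr rfl fun k _ => by ring
      _ = ((∑ m ∈ S, ∑ k ∈ S, |A m k| * w m ^ 2)
            + ∑ m ∈ S, ∑ k ∈ S, |A m k| * w k ^ 2) / 2 := by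
          rw [← Finset.sum_add_distrib, Finset.sum_div]
          refine Finset.sum_congr rfl fun m _ => ?_
          rw [← Finset.sum_add_distrib, Finset.sum_div]
      _ = ∑ m ∈ S, ∑ k ∈ S, |A m k| * w m ^ 2 := by
          have hswap : ∑ m ∈ S, ∑ k ∈ S, |A m k| * w k ^ 2
              = ∑ m ∈ S, ∑ k ∈ S, |A m k| * w m ^ 2 := by
            rw [Finset.sum_comm]
            exact Finset.sum_congr rfl fun m _ => Finset.sum_congr rfl fun k _ => by
              rw [hsym]
          rw [hswap]; ring
      _ = ∑ m ∈ S, (∑ k ∈ S, |A m k|) * w m ^ 2 := by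
          exact Finset.sum_congr rfl fun m _ => by rw [Finset.sum_mul]
      _ ≤ ∑ m ∈ S, M * w m ^ 2 := by
          refine Finset.sum_le_sum fun m hm => ?_
          exact mul_le_mul_of_nonneg_right
            (Finset.le_sup' (fun j => ∑ k ∈ S, |A j k|) hm) (sq_nonneg _)
  exact le_of_mul_le_mul_right (hlow.trans hup) hpos
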